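/- Let $\Omega\subset\mathbb{R}^n$ be a bounded domain, $1<q<\infty$, $\beta\in\mathbb{R}$ with $d^{\beta p}\in L^1(\Omega)$ where $p$ is the conjugate exponent of $q$ and $d(x)=\mathrm{dist}(x,\partial\Omega)$. Define $V$ as the set of functions of the form $g + \psi d^{\beta p}$ where $\psi\in\mathbb{R}$ and $g\in L^q(\Omega,d^{-\beta q})$ has compact support in $\Omega$ (closure of the support contained in $\Omega$) and $\int_\Omega g=0$. Then $V$ is dense in $L^q(\Omega,d^{-\beta q})$. -/

import Mathlib

open MeasureTheory

lemma aux_rpow_add {a b q : ℝ} (ha : 0 ≤ a) (hb : 0 ≤ b) (hq : 0 < q) :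
    (a + b) ^ q ≤ 2 ^ q * (a ^ q + b ^ q) := by
  have h1 : a + b ≤ 2 * max a b := by
    rcases le_total a b with h | h <;> simp [max_eq_right, max_eq_left, h] <;> nlinarith
  have h2 : (a + b) ^ q ≤ (2 * max a b) ^ q :=
    Real.rpow_le_rpow (by linarith) h1 hq.le
  have h3 : (2 * max a b) ^ q = 2 ^ q * (max a b) ^ q :=
    Real.mul_rpow (by norm_num) (le_max_of_le_left ha)
  have h4 : (max a b) ^ q ≤ a ^ q + b ^ q := by
    rcases le_total a b with h | h
    · rw [max_eq_right h]
      exact le_add_of_nonneg_left (Real.rpow_nonneg ha q)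
    · rw [max_eq_left h]
      exact le_add_of_nonneg_right (Real.rpow_nonneg hb q)
  calc (a + b) ^ q ≤ 2 ^ q * (max a b) ^ q := by rw [← h3]; exact h2
    _ ≤ 2 ^ q * (a ^ q + b ^ q) := by
        have : (0:ℝ) ≤ 2 ^ q := Real.rpow_nonneg (by norm_num) q
        nlinarith

-- degenerate case as a standalone lemma
private lemma stmt9_flat {n : ℕ} (Ω : Set (EuclideanSpace ℝ (Fin n)))
    (hΩo : IsOpen Ω) (hΩb : Bornology.IsBounded Ω) (hΩne : Ω.Nonempty)
    (p q β : ℝ) (hp : 1 < p) (hq : 1 < q) (hpq : 1 / p + 1 / q = 1)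
    (d : EuclideanSpace ℝ (Fin n) → ℝ)
    (hd : d = fun x => Metric.infDist x (frontier Ω))
    (hw : IntegrableOn (fun x => d x ^ (β * p)) Ω)
    (F : EuclideanSpace ℝ (Fin n) → ℝ)
    (hFm : AEMeasurable F (volume.restrict Ω))
    (hFq : IntegrableOn (fun x => |F x| ^ q * d x ^ (-β * q)) Ω)
    (ε : ℝ) (hε : 0 < ε)
    (hfr : frontier Ω = ∅) (hβ : β = 0) :
        ∃ (g : EuclideanSpace ℝ (Fin n) → ℝ) (ψ : ℝ),
          AEMeasurable g (volume.restrict Ω) ∧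
          IntegrableOn (fun x => |g x| ^ q * d x ^ (-β * q)) Ω ∧
          closure (Function.support g) ⊆ Ω ∧
          (∫ x in Ω, g x) = 0 ∧
          (∫ x in Ω, |F x - (g x + ψ * d x ^ (β * p))| ^ q * d x ^ (-β * q)) ^ (1 / q) < ε := by
  have hΩm : MeasurableSet Ω := hΩo.measurableSet
  have hq0 : (0:ℝ) < q := zero_lt_one.trans hq
  have hp0 : (0:ℝ) < p := zero_lt_one.trans hp
  have hconj : p.HolderConjugate q := ⟨by rw [inv_one, ← one_div, ← one_div]; exact hpq, hp0, hq0⟩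
  have hμΩ : volume Ω < ⊤ := hΩb.measure_lt_top
  have hμΩpos : 0 < volume Ω := hΩo.measure_pos volume hΩne
  have hΩu : Ω = Set.univ := (isClopen_iff_frontier_eq_empty.mpr hfr).eq_univ hΩne
  have hP1 : ∀ x, d x ^ (β * p) = (1:ℝ) := by intro x; simp [hβ]
  have hw1 : ∀ x, d x ^ (-β * q) = (1:ℝ) := by intro x; simp [hβ]
  have hV : (0:ℝ) < (volume Ω).toReal := ENNReal.toReal_pos hμΩpos.ne' hμΩ.ne
  -- F integrable
  have hdom1 : IntegrableOn (fun x => |F x| ^ q * d x ^ (-β * q) / q + 1/p) Ω :=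
    (hFq.div_const q).add (integrableOn_const hμΩ.ne)
  have hb1 : ∀ᵐ x ∂(volume.restrict Ω), ‖F x‖ ≤ |F x| ^ q * d x ^ (-β * q) / q + 1/p := by
    refine Filter.Eventually.of_forall fun x => ?_
    have hy := Real.young_inequality_of_nonneg (abs_nonneg (F x)) zero_le_one hconj.symm
    rw [mul_one, Real.one_rpow] at hy
    rw [Real.norm_eq_abs, hw1 x, mul_one]
    exact hy
  have hFi : IntegrableOn F Ω := Integrable.mono' hdom1 hFm.aestronglyMeasurable hb1
  set ψ : ℝ := (∫ x in Ω, F x) / (volume Ω).toReal with hψ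
  refine ⟨fun x => F x - ψ, ψ, hFm.sub aemeasurable_const, ?_, ?_, ?_, ?_⟩
  · -- integrability of |g|^q * w
    have hdom2 : IntegrableOn (fun x => 2 ^ q * (|F x| ^ q * d x ^ (-β * q) + |ψ| ^ q)) Ω :=
      ((hFq.add (integrableOn_const hμΩ.ne)).const_mul _)
    have hsm : AEStronglyMeasurable (fun x => |F x - ψ| ^ q * d x ^ (-β * q))
        (volume.restrict Ω) := by
      have hdm : Measurable d := by rw [hd]; exact (Metric.continuous_infDist_pt _).measurable
      have h1 : AEMeasurable (fun x => |F x - ψ| ^ q) (volume.restrict Ω) :=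
        (continuous_abs.measurable.comp_aemeasurable (hFm.sub aemeasurable_const)).pow
          aemeasurable_const
      exact (h1.mul ((hdm.pow measurable_const).aemeasurable)).aestronglyMeasurable
    refine Integrable.mono' hdom2 hsm ?_
    refine Filter.Eventually.of_forall fun x => ?_
    rw [Real.norm_eq_abs, hw1 x, mul_one, mul_one,
      abs_of_nonneg (Real.rpow_nonneg (abs_nonneg _) q)]
    calc |F x - ψ| ^ q ≤ (|F x| + |ψ|) ^ q :=
          Real.rpow_le_rpow (abs_nonneg _) (abs_sub _ _) hq0.le
      _ ≤ 2 ^ q * (|F x| ^ q + |ψ| ^ q) := aux_rpow_add (abs_nonneg _) (abs_nonneg _) hq0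
  · rw [hΩu]; exact Set.subset_univ _
  · rw [integral_sub hFi (integrableOn_const hμΩ.ne), setIntegral_const,
      smul_eq_mul, measureReal_def, hψ]
    field_simp
    ring
  · have hzero : ∀ x ∈ Ω,
        |F x - ((F x - ψ) + ψ * d x ^ (β * p))| ^ q * d x ^ (-β * q) = 0 := by
      intro x _
      rw [hP1 x, mul_one]
      have : F x - (F x - ψ + ψ) = 0 := by ring
      rw [this, abs_zero, Real.zero_rpow hq0.ne', zero_mul]
    rw [setIntegral_congr_fun hΩm hzero, integral_zero, Real.zero_rpow (by positivity)]
    exact hε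


set_option maxHeartbeats 3000000 in
private lemma stmt9_main {n : ℕ} (Ω : Set (EuclideanSpace ℝ (Fin n)))
    (hΩo : IsOpen Ω) (hΩb : Bornology.IsBounded Ω) (hΩne : Ω.Nonempty)
    (p q β : ℝ) (hp : 1 < p) (hq : 1 < q) (hpq : 1 / p + 1 / q = 1)
    (d : EuclideanSpace ℝ (Fin n) → ℝ)
    (hd : d = fun x => Metric.infDist x (frontier Ω))
    (hw : IntegrableOn (fun x => d x ^ (β * p)) Ω)
    (F : EuclideanSpace ℝ (Fin n) → ℝ)
    (hFm : AEMeasurable F (volume.restrict Ω))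
    (hFq : IntegrableOn (fun x => |F x| ^ q * d x ^ (-β * q)) Ω)
    (ε : ℝ) (hε : 0 < ε)
    (hfr : (frontier Ω).Nonempty) :
        ∃ (g : EuclideanSpace ℝ (Fin n) → ℝ) (ψ : ℝ),
          AEMeasurable g (volume.restrict Ω) ∧
          IntegrableOn (fun x => |g x| ^ q * d x ^ (-β * q)) Ω ∧
          closure (Function.support g) ⊆ Ω ∧
          (∫ x in Ω, g x) = 0 ∧
          (∫ x in Ω, |F x - (g x + ψ * d x ^ (β * p))| ^ q * d x ^ (-β * q)) ^ (1 / q) < ε := by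
  have hΩm : MeasurableSet Ω := hΩo.measurableSet
  have hq0 : (0:ℝ) < q := zero_lt_one.trans hq
  have hp0 : (0:ℝ) < p := zero_lt_one.trans hp
  have hconj : p.HolderConjugate q := ⟨by rw [inv_one, ← one_div, ← one_div]; exact hpq, hp0, hq0⟩
  have hμΩ : volume Ω < ⊤ := hΩb.measure_lt_top
  have hμΩpos : 0 < volume Ω := hΩo.measure_pos volume hΩne
  have hdc : Continuous d := by rw [hd]; exact Metric.continuous_infDist_pt _
  have hdm : Measurable d := hdc.measurable
  have hd0 : ∀ x, 0 ≤ d x := by rw [hd]; intro x; exact Metric.infDist_nonneg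
  have hdpos : ∀ x ∈ Ω, 0 < d x := by
    intro x hx
    rw [hd]
    refine (IsClosed.notMem_iff_infDist_pos isClosed_frontier hfr).mp ?_
    rw [hΩo.frontier_eq]
    exact fun h => h.2 hx
  have hpq' : p * q = p + q := by field_simp at hpq; linarith
  -- key rpow identity on Ω
  have hkey : ∀ x ∈ Ω, (d x ^ (β * p)) ^ q * d x ^ (-β * q) = d x ^ (β * p) := by
    intro x hx
    rw [← Real.rpow_mul (hd0 x), ← Real.rpow_add (hdpos x hx)]
    congr 1
    linear_combination β * hpq'
  -- F is integrable on Ω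
  have hdom1 : IntegrableOn
      (fun x => |F x| ^ q * d x ^ (-β * q) / q + d x ^ (β * p) / p) Ω :=
    (hFq.div_const q).add (hw.div_const p)
  have hb1 : ∀ᵐ x ∂(volume.restrict Ω),
      ‖F x‖ ≤ |F x| ^ q * d x ^ (-β * q) / q + d x ^ (β * p) / p := by
    refine (ae_restrict_iff' hΩm).mpr (Filter.Eventually.of_forall fun x hx => ?_)
    have hdx := hdpos x hx
    have hy := Real.young_inequality_of_nonneg
      (mul_nonneg (abs_nonneg (F x)) (Real.rpow_nonneg (hd0 x) (-β)))
      (Real.rpow_nonneg (hd0 x) β) hconj.symm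
    have e1 : |F x| * d x ^ (-β) * d x ^ β = |F x| := by
      rw [mul_assoc, ← Real.rpow_add hdx]
      simp
    have e2 : (|F x| * d x ^ (-β)) ^ q = |F x| ^ q * d x ^ (-β * q) := by
      rw [Real.mul_rpow (abs_nonneg _) (Real.rpow_nonneg (hd0 x) _),
        ← Real.rpow_mul (hd0 x)]
    have e3 : (d x ^ β) ^ p = d x ^ (β * p) := by
      rw [← Real.rpow_mul (hd0 x)]
    rw [e1, e2, e3] at hy
    rw [Real.norm_eq_abs]
    exact hy
  have hFi : IntegrableOn F Ω := Integrable.mono' hdom1 hFm.aestronglyMeasurable hb1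
  -- positivity of the denominator
  set D : ℝ := ∫ x in Ω, d x ^ (β * p) with hDdef
  have hD : 0 < D := by
    rw [hDdef]
    rw [setIntegral_pos_iff_support_of_nonneg_ae
      (Filter.Eventually.of_forall fun x => Real.rpow_nonneg (hd0 x) _) hw]
    refine lt_of_lt_of_le hμΩpos (measure_mono fun x hx => ?_)
    exact ⟨(Real.rpow_pos_of_pos (hdpos x hx) _).ne', hx⟩
  set ψ : ℝ := (∫ x in Ω, F x) / D with hψdef
  set G : EuclideanSpace ℝ (Fin n) → ℝ := fun x => F x - ψ * d x ^ (β * p) with hGdef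
  have hGi : IntegrableOn G Ω := hFi.sub (hw.const_mul ψ)
  have hGm : AEMeasurable G (volume.restrict Ω) :=
    hFm.sub (((hdm.pow measurable_const).const_mul ψ).aemeasurable)
  have hG0 : ∫ x in Ω, G x = 0 := by
    rw [hGdef]
    rw [integral_sub hFi (hw.const_mul ψ), integral_const_mul, hψdef, ← hDdef,
      div_mul_cancel₀ _ hD.ne', sub_self]
  -- weighted L^q integrability of G
  have hGq : IntegrableOn (fun x => |G x| ^ q * d x ^ (-β * q)) Ω := by
    have hdom2 : IntegrableOn
        (fun x => 2 ^ q * (|F x| ^ q * d x ^ (-β * q) + |ψ| ^ q * d x ^ (β * p))) Ω :=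
      (hFq.add (hw.const_mul _)).const_mul _
    have hsm : AEStronglyMeasurable (fun x => |G x| ^ q * d x ^ (-β * q))
        (volume.restrict Ω) :=
      (((continuous_abs.measurable.comp_aemeasurable hGm).pow aemeasurable_const).mul
        ((hdm.pow measurable_const).aemeasurable)).aestronglyMeasurable
    refine Integrable.mono' hdom2 hsm ?_
    refine (ae_restrict_iff' hΩm).mpr (Filter.Eventually.of_forall fun x hx => ?_)
    have w0 : (0:ℝ) ≤ d x ^ (-β * q) := Real.rpow_nonneg (hd0 x) _
    have habs : |G x| ≤ |F x| + |ψ| * d x ^ (β * p) := by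
      rw [hGdef]
      refine (abs_sub _ _).trans ?_
      rw [abs_mul, abs_of_nonneg (Real.rpow_nonneg (hd0 x) _)]
    have h5 : |G x| ^ q ≤ 2 ^ q * (|F x| ^ q + |ψ| ^ q * (d x ^ (β * p)) ^ q) := by
      calc |G x| ^ q ≤ (|F x| + |ψ| * d x ^ (β * p)) ^ q :=
            Real.rpow_le_rpow (abs_nonneg _) habs hq0.le
        _ ≤ 2 ^ q * (|F x| ^ q + (|ψ| * d x ^ (β * p)) ^ q) :=
            aux_rpow_add (abs_nonneg _)
              (mul_nonneg (abs_nonneg _) (Real.rpow_nonneg (hd0 x) _)) hq0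
        _ = 2 ^ q * (|F x| ^ q + |ψ| ^ q * (d x ^ (β * p)) ^ q) := by
            rw [Real.mul_rpow (abs_nonneg _) (Real.rpow_nonneg (hd0 x) _)]
    rw [Real.norm_eq_abs, abs_of_nonneg (mul_nonneg
      (Real.rpow_nonneg (abs_nonneg _) _) w0)]
    calc |G x| ^ q * d x ^ (-β * q)
        ≤ (2 ^ q * (|F x| ^ q + |ψ| ^ q * (d x ^ (β * p)) ^ q)) * d x ^ (-β * q) :=
          mul_le_mul_of_nonneg_right h5 w0
      _ = 2 ^ q * (|F x| ^ q * d x ^ (-β * q)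
            + |ψ| ^ q * ((d x ^ (β * p)) ^ q * d x ^ (-β * q))) := by ring
      _ = 2 ^ q * (|F x| ^ q * d x ^ (-β * q) + |ψ| ^ q * d x ^ (β * p)) := by
          rw [hkey x hx]
  -- the master nonnegative integrable function controlling tails
  set f₀ : EuclideanSpace ℝ (Fin n) → ℝ :=
    fun x => |G x| ^ q * d x ^ (-β * q) + |G x| with hf₀def
  have hf₀i : IntegrableOn f₀ Ω := hGq.add hGi.abs
  have hf₀0 : ∀ x, 0 ≤ f₀ x := fun x =>
    add_nonneg (mul_nonneg (Real.rpow_nonneg (abs_nonneg _) _)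
      (Real.rpow_nonneg (hd0 x) _)) (abs_nonneg _)
  -- compact exhaustion of Ω
  set K : ℕ → Set (EuclideanSpace ℝ (Fin n)) :=
    fun m => closure Ω ∩ d ⁻¹' Set.Ici (1 / (m + 1)) with hKdef
  have hKcl : ∀ m, IsClosed (K m) :=
    fun m => isClosed_closure.inter (isClosed_Ici.preimage hdc)
  have hKcomp : ∀ m, IsCompact (K m) := fun m =>
    Metric.isCompact_of_isClosed_isBounded (hKcl m)
      (hΩb.closure.subset Set.inter_subset_left)
  have hKm : ∀ m, MeasurableSet (K m) := fun m => (hKcl m).measurableSet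
  have hKsub : ∀ m, K m ⊆ Ω := by
    intro m x hx
    by_contra hxΩ
    have hxf : x ∈ frontier Ω := by
      rw [hΩo.frontier_eq]; exact ⟨hx.1, hxΩ⟩
    have : d x = 0 := by rw [hd]; exact Metric.infDist_zero_of_mem hxf
    have h1 : (0:ℝ) < 1 / (m + 1) := by positivity
    have h2 : 1 / ((m:ℝ) + 1) ≤ d x := hx.2
    linarith
  have hKmono : Monotone K := by
    intro m m' hmm
    refine Set.inter_subset_inter_right _ (Set.preimage_mono ?_)
    refine Set.Ici_subset_Ici.mpr ?_
    have hcast : (m:ℝ) ≤ m' := Nat.cast_le.mpr hmm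
    exact one_div_le_one_div_of_le (by positivity) (by linarith)
  have hKUnion : (⋃ m, K m) = Ω := by
    refine Set.Subset.antisymm (Set.iUnion_subset hKsub) fun x hx => ?_
    obtain ⟨m, hm⟩ := exists_nat_one_div_lt (hdpos x hx)
    exact Set.mem_iUnion.mpr ⟨m, subset_closure hx, le_of_lt hm⟩
  -- the ball
  obtain ⟨x₀, hx₀⟩ := hΩne
  obtain ⟨r, hr, hball⟩ := Metric.isOpen_iff.mp hΩo x₀ hx₀
  set B : Set (EuclideanSpace ℝ (Fin n)) := Metric.closedBall x₀ (r / 2) with hBdef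
  have hBΩ : B ⊆ Ω :=
    (Metric.closedBall_subset_ball (by linarith)).trans hball
  have hBm : MeasurableSet B := Metric.isClosed_closedBall.measurableSet
  have hBcl : IsClosed B := Metric.isClosed_closedBall
  have hvB : 0 < (volume B).toReal :=
    ENNReal.toReal_pos (Metric.measure_closedBall_pos volume x₀ (by linarith)).ne'
      (measure_mono hBΩ |>.trans_lt hμΩ).ne
  -- weight integral over B
  have hwB : IntegrableOn (fun x => d x ^ (-β * q)) B := by
    refine ContinuousOn.integrableOn_compact (isCompact_closedBall _ _) ?_
    exact hdc.continuousOn.rpow_const fun x hx => Or.inl (hdpos x (hBΩ hx)).ne'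
  set W : ℝ := ∫ x in B, d x ^ (-β * q) with hWdef
  have hW0 : 0 ≤ W :=
    setIntegral_nonneg hBm fun x _ => Real.rpow_nonneg (hd0 x) _
  -- choice of thresholds
  have hεq : (0:ℝ) < ε ^ q := Real.rpow_pos_of_pos hε q
  set δ₂ : ℝ := (volume B).toReal * (ε ^ q / (2 * (W + 1))) ^ (1 / q) with hδ₂def
  have hδ₂ : 0 < δ₂ := by
    refine mul_pos hvB (Real.rpow_pos_of_pos ?_ _)
    positivity
  set δ : ℝ := min (ε ^ q / 2) δ₂ with hδdef
  have hδ : 0 < δ := lt_min (by positivity) hδ₂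
  -- pick a compact piece with small tail
  have htends : Filter.Tendsto (fun m => ∫ x in K m, f₀ x) Filter.atTop
      (nhds (∫ x in Ω, f₀ x)) := by
    have := tendsto_setIntegral_of_monotone hKm hKmono (hKUnion ▸ hf₀i)
    rwa [hKUnion] at this
  have hev : ∀ᶠ m in Filter.atTop,
      (∫ x in Ω, f₀ x) - δ < ∫ x in K m, f₀ x :=
    htends.eventually (eventually_gt_nhds (by linarith))
  obtain ⟨m, hm⟩ := hev.exists
  have htail : ∫ x in Ω \ K m, f₀ x < δ := by
    rw [integral_diff (hKm m) hf₀i (hKsub m)]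
    linarith
  -- the final compact set
  set K' : Set (EuclideanSpace ℝ (Fin n)) := K m ∪ B with hK'def
  have hK'cl : IsClosed K' := (hKcl m).union hBcl
  have hK'm : MeasurableSet K' := hK'cl.measurableSet
  have hK'Ω : K' ⊆ Ω := Set.union_subset (hKsub m) hBΩ
  have hBK' : B ⊆ K' := Set.subset_union_right
  have htail' : ∫ x in Ω \ K', f₀ x < δ := by
    refine lt_of_le_of_lt ?_ htail
    refine setIntegral_mono_set (hf₀i.mono_set Set.diff_subset)
      (Filter.Eventually.of_forall hf₀0) (HasSubset.Subset.eventuallyLE ?_)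
    exact Set.diff_subset_diff_right Set.subset_union_left
  have hΩK'm : MeasurableSet (Ω \ K') := hΩm.diff hK'm
  -- tail fluxes
  set T₁ : ℝ := ∫ x in Ω \ K', |G x| ^ q * d x ^ (-β * q) with hT₁def
  have hT₁nonneg : 0 ≤ T₁ :=
    setIntegral_nonneg hΩK'm fun x _ =>
      mul_nonneg (Real.rpow_nonneg (abs_nonneg _) _) (Real.rpow_nonneg (hd0 x) _)
  have hT₁lt : T₁ < ε ^ q / 2 := by
    have h1 : T₁ ≤ ∫ x in Ω \ K', f₀ x := by
      refine setIntegral_mono_on (hGq.mono_set Set.diff_subset)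
        (hf₀i.mono_set Set.diff_subset) hΩK'm fun x _ => ?_
      exact le_add_of_nonneg_right (abs_nonneg _)
    calc T₁ ≤ ∫ x in Ω \ K', f₀ x := h1
      _ < δ := htail'
      _ ≤ ε ^ q / 2 := min_le_left _ _
  set I : ℝ := ∫ x in Ω \ K', G x with hIdef
  have hIlt : |I| < δ₂ := by
    have h1 : |I| ≤ ∫ x in Ω \ K', |G x| := by
      rw [hIdef, ← Real.norm_eq_abs]
      exact (norm_integral_le_integral_norm _).trans (le_of_eq (by simp [Real.norm_eq_abs]))
    have h2 : (∫ x in Ω \ K', |G x|) ≤ ∫ x in Ω \ K', f₀ x := by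
      refine setIntegral_mono_on ((show IntegrableOn (fun x => |G x|) Ω volume from hGi.abs).mono_set Set.diff_subset)
        (hf₀i.mono_set Set.diff_subset) hΩK'm fun x _ => ?_
      exact le_add_of_nonneg_left
        (mul_nonneg (Real.rpow_nonneg (abs_nonneg _) _) (Real.rpow_nonneg (hd0 x) _))
    calc |I| ≤ ∫ x in Ω \ K', |G x| := h1
      _ ≤ ∫ x in Ω \ K', f₀ x := h2
      _ < δ := htail'
      _ ≤ δ₂ := min_le_right _ _
  set c : ℝ := I / (volume B).toReal with hcdef
  have hclt : |c| < (ε ^ q / (2 * (W + 1))) ^ (1 / q) := by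
    rw [hcdef, abs_div, abs_of_pos hvB]
    rw [div_lt_iff₀ hvB]
    calc |I| < δ₂ := hIlt
      _ = (ε ^ q / (2 * (W + 1))) ^ (1 / q) * (volume B).toReal := by
          rw [hδ₂def]; ring
  have hcq : |c| ^ q < ε ^ q / (2 * (W + 1)) := by
    have h1 := Real.rpow_lt_rpow (abs_nonneg c) hclt hq0
    have h2 : ((ε ^ q / (2 * (W + 1))) ^ (1 / q)) ^ q
        = ε ^ q / (2 * (W + 1)) := by
      rw [← Real.rpow_mul (by positivity), one_div_mul_cancel hq0.ne', Real.rpow_one]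
    rwa [h2] at h1
  have hc2 : |c| ^ q * W < ε ^ q / 2 := by
    have hcq0 : 0 ≤ |c| ^ q := Real.rpow_nonneg (abs_nonneg _) _
    have h3 := mul_lt_mul_of_pos_right hcq (show (0:ℝ) < W + 1 by linarith)
    have h4 : ε ^ q / (2 * (W + 1)) * (W + 1) = ε ^ q / 2 := by
      field_simp
    nlinarith
  -- the approximating function
  set g : EuclideanSpace ℝ (Fin n) → ℝ :=
    fun x => K'.indicator G x + B.indicator (fun _ => c) x with hgdef
  have hgint1 : Integrable (K'.indicator G) (volume.restrict Ω) := hGi.indicator hK'm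
  have hgint2 : Integrable (B.indicator fun _ => c) (volume.restrict Ω) :=
    (integrableOn_const hμΩ.ne :
      IntegrableOn (fun _ => c) Ω volume).indicator hBm
  have hK'G : ∫ x in K', G x = -I := by
    have hdiff := integral_diff hK'm hGi hK'Ω
    rw [hG0] at hdiff
    rw [hIdef] at *
    linarith [hdiff]
  refine ⟨g, ψ, ?_, ?_, ?_, ?_, ?_⟩
  · exact (hGm.indicator hK'm).add (aemeasurable_const.indicator hBm)
  · -- weighted L^q integrability of g
    have hindB : Integrable
        (B.indicator fun y => |c| ^ q * d y ^ (-β * q)) (volume.restrict Ω) :=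
      (MeasureTheory.IntegrableOn.integrable_indicator
        (hwB.const_mul (|c| ^ q)) hBm).integrableOn
    have hdom3 : IntegrableOn (fun x => 2 ^ q * (|G x| ^ q * d x ^ (-β * q)
        + B.indicator (fun y => |c| ^ q * d y ^ (-β * q)) x)) Ω :=
      (hGq.add hindB).const_mul _
    have hsm : AEStronglyMeasurable (fun x => |g x| ^ q * d x ^ (-β * q))
        (volume.restrict Ω) := by
      have hgm : AEMeasurable g (volume.restrict Ω) :=
        (hGm.indicator hK'm).add (aemeasurable_const.indicator hBm)
      exact (((continuous_abs.measurable.comp_aemeasurable hgm).pow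
        aemeasurable_const).mul ((hdm.pow measurable_const).aemeasurable)).aestronglyMeasurable
    refine Integrable.mono' hdom3 hsm ?_
    refine (ae_restrict_iff' hΩm).mpr (Filter.Eventually.of_forall fun x hx => ?_)
    have w0 : (0:ℝ) ≤ d x ^ (-β * q) := Real.rpow_nonneg (hd0 x) _
    have habs : |g x| ≤ |G x| + B.indicator (fun _ => |c|) x := by
      simp only [hgdef]
      refine (abs_add_le _ _).trans (add_le_add ?_ ?_)
      · by_cases hxK : x ∈ K'
        · simp [Set.indicator_of_mem hxK]
        · simp [Set.indicator_of_notMem hxK, abs_nonneg]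
      · by_cases hxB : x ∈ B
        · simp [Set.indicator_of_mem hxB]
        · simp [Set.indicator_of_notMem hxB]
    have hindpow : (B.indicator (fun _ => |c|) x) ^ q
        = B.indicator (fun _ => |c| ^ q) x := by
      by_cases hxB : x ∈ B
      · simp [Set.indicator_of_mem hxB]
      · simp [Set.indicator_of_notMem hxB, Real.zero_rpow hq0.ne']
    have hind0 : 0 ≤ B.indicator (fun _ => |c|) x :=
      Set.indicator_nonneg (fun _ _ => abs_nonneg _) x
    have h5 : |g x| ^ q ≤ 2 ^ q * (|G x| ^ q + B.indicator (fun _ => |c| ^ q) x) := by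
      calc |g x| ^ q ≤ (|G x| + B.indicator (fun _ => |c|) x) ^ q :=
            Real.rpow_le_rpow (abs_nonneg _) habs hq0.le
        _ ≤ 2 ^ q * (|G x| ^ q + (B.indicator (fun _ => |c|) x) ^ q) :=
            aux_rpow_add (abs_nonneg _) hind0 hq0
        _ = 2 ^ q * (|G x| ^ q + B.indicator (fun _ => |c| ^ q) x) := by rw [hindpow]
    rw [Real.norm_eq_abs, abs_of_nonneg (mul_nonneg
      (Real.rpow_nonneg (abs_nonneg _) _) w0)]
    have hindmul : B.indicator (fun _ => |c| ^ q) x * d x ^ (-β * q)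
        = B.indicator (fun y => |c| ^ q * d y ^ (-β * q)) x := by
      by_cases hxB : x ∈ B
      · simp [Set.indicator_of_mem hxB]
      · simp [Set.indicator_of_notMem hxB]
    calc |g x| ^ q * d x ^ (-β * q)
        ≤ (2 ^ q * (|G x| ^ q + B.indicator (fun _ => |c| ^ q) x)) * d x ^ (-β * q) :=
          mul_le_mul_of_nonneg_right h5 w0
      _ = 2 ^ q * (|G x| ^ q * d x ^ (-β * q)
            + B.indicator (fun _ => |c| ^ q) x * d x ^ (-β * q)) := by ring
      _ = 2 ^ q * (|G x| ^ q * d x ^ (-β * q)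
            + B.indicator (fun y => |c| ^ q * d y ^ (-β * q)) x) := by rw [hindmul]
  · -- support condition
    have hsupp : Function.support g ⊆ K' := by
      intro x hx
      by_contra hxK
      have h1 : K'.indicator G x = 0 := Set.indicator_of_notMem hxK _
      have h2 : B.indicator (fun _ => c) x = 0 :=
        Set.indicator_of_notMem (fun hB => hxK (hBK' hB)) _
      exact hx (by simp only [hgdef]; rw [h1, h2, add_zero])
    exact (closure_minimal hsupp hK'cl).trans hK'Ω
  · -- zero average
    simp only [hgdef]
    rw [integral_add hgint1 hgint2, setIntegral_indicator hK'm,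
      setIntegral_indicator hBm, Set.inter_eq_self_of_subset_right hK'Ω,
      Set.inter_eq_self_of_subset_right hBΩ, setIntegral_const, smul_eq_mul, measureReal_def, hK'G,
      hcdef, mul_div_cancel₀ _ hvB.ne']
    ring
  · -- the error estimate
    have hint1 : Integrable ((Ω \ K').indicator
        (fun y => |G y| ^ q * d y ^ (-β * q))) (volume.restrict Ω) :=
      hGq.indicator hΩK'm
    have hint2 : Integrable (B.indicator
        (fun y => |c| ^ q * d y ^ (-β * q))) (volume.restrict Ω) :=
      (MeasureTheory.IntegrableOn.integrable_indicator
        (hwB.const_mul (|c| ^ q)) hBm).integrableOn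
    have hEq : Set.EqOn
        (fun x => |F x - (g x + ψ * d x ^ (β * p))| ^ q * d x ^ (-β * q))
        (fun x => (Ω \ K').indicator (fun y => |G y| ^ q * d y ^ (-β * q)) x
          + B.indicator (fun y => |c| ^ q * d y ^ (-β * q)) x) Ω := by
      intro x hx
      have hFG : F x - (g x + ψ * d x ^ (β * p)) = G x - g x := by
        simp only [hGdef]; ring
      simp only [hFG]; simp only [hgdef]
      by_cases hxB : x ∈ B
      · have hxK : x ∈ K' := hBK' hxB
        rw [Set.indicator_of_mem hxK, Set.indicator_of_mem hxB,
          Set.indicator_of_notMem (fun h : x ∈ Ω \ K' => h.2 hxK),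
          Set.indicator_of_mem hxB]
        have he : G x - (G x + c) = -c := by ring
        rw [he, abs_neg, zero_add]
      · by_cases hxK : x ∈ K'
        · rw [Set.indicator_of_mem hxK, Set.indicator_of_notMem hxB,
            Set.indicator_of_notMem (fun h : x ∈ Ω \ K' => h.2 hxK),
            Set.indicator_of_notMem hxB]
          have he : G x - (G x + 0) = 0 := by ring
          rw [he, abs_zero, Real.zero_rpow hq0.ne', zero_mul, zero_add]
        · rw [Set.indicator_of_notMem hxK, Set.indicator_of_notMem hxB,
            Set.indicator_of_mem (show x ∈ Ω \ K' from ⟨hx, hxK⟩),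
            Set.indicator_of_notMem hxB]
          have he : G x - (0 + 0) = G x := by ring
          rw [he, add_zero]
    have hval : (∫ x in Ω, |F x - (g x + ψ * d x ^ (β * p))| ^ q * d x ^ (-β * q))
        = T₁ + |c| ^ q * W := by
      rw [setIntegral_congr_fun hΩm hEq, integral_add hint1 hint2,
        setIntegral_indicator hΩK'm, setIntegral_indicator hBm]
      rw [Set.inter_eq_self_of_subset_right (Set.diff_subset : Ω \ K' ⊆ Ω),
        Set.inter_eq_self_of_subset_right hBΩ, hT₁def, hWdef, integral_const_mul]
    have htot : T₁ + |c| ^ q * W < ε ^ q := by linarith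
    have hnn : 0 ≤ T₁ + |c| ^ q * W :=
      add_nonneg hT₁nonneg (mul_nonneg (Real.rpow_nonneg (abs_nonneg _) _) hW0)
    calc (∫ x in Ω, |F x - (g x + ψ * d x ^ (β * p))| ^ q * d x ^ (-β * q)) ^ (1/q)
        = (T₁ + |c| ^ q * W) ^ (1/q) := by rw [hval]
      _ < (ε ^ q) ^ (1/q) := Real.rpow_lt_rpow hnn htot (by positivity)
      _ = ε := by
          rw [← Real.rpow_mul hε.le, mul_one_div_cancel hq0.ne', Real.rpow_one]


theorem stmt9 {n : ℕ} (Ω : Set (EuclideanSpace ℝ (Fin n)))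
    (hΩo : IsOpen Ω) (hΩb : Bornology.IsBounded Ω) (hΩne : Ω.Nonempty)
    (p q β : ℝ) (hp : 1 < p) (hq : 1 < q) (hpq : 1 / p + 1 / q = 1)
    (d : EuclideanSpace ℝ (Fin n) → ℝ)
    (hd : d = fun x => Metric.infDist x (frontier Ω))
    (hw : IntegrableOn (fun x => d x ^ (β * p)) Ω) :
    ∀ F : EuclideanSpace ℝ (Fin n) → ℝ,
      AEMeasurable F (volume.restrict Ω) →
      IntegrableOn (fun x => |F x| ^ q * d x ^ (-β * q)) Ω →
      ∀ ε : ℝ, 0 < ε →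
        ∃ (g : EuclideanSpace ℝ (Fin n) → ℝ) (ψ : ℝ),
          AEMeasurable g (volume.restrict Ω) ∧
          IntegrableOn (fun x => |g x| ^ q * d x ^ (-β * q)) Ω ∧
          closure (Function.support g) ⊆ Ω ∧
          (∫ x in Ω, g x) = 0 ∧
          (∫ x in Ω, |F x - (g x + ψ * d x ^ (β * p))| ^ q * d x ^ (-β * q)) ^ (1 / q) < ε := by
  intro F hFm hFq ε hε
  have hΩm : MeasurableSet Ω := hΩo.measurableSet
  have hq0 : (0:ℝ) < q := zero_lt_one.trans hq
  have hμΩ : volume Ω < ⊤ := hΩb.measure_lt_top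
  by_cases hfr : (frontier Ω).Nonempty
  · exact stmt9_main Ω hΩo hΩb hΩne p q β hp hq hpq d hd hw F hFm hFq ε hε hfr
  · rw [Set.not_nonempty_iff_eq_empty] at hfr
    by_cases hβ : β = 0
    · exact stmt9_flat Ω hΩo hΩb hΩne p q β hp hq hpq d hd hw F hFm hFq ε hε hfr hβ
    · have hde : ∀ x, d x = 0 := by
        rw [hd]; intro x; simp [hfr, Metric.infDist_empty]
      have hw0 : ∀ x, d x ^ (-β * q) = 0 := by
        intro x; rw [hde x]; exact Real.zero_rpow (by simp [hβ, hq0.ne'])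
      refine ⟨fun _ => (0:ℝ), 0, aemeasurable_const, ?_, ?_, by simp, ?_⟩
      · have h0 : (fun x => |(0:ℝ)| ^ q * d x ^ (-β * q)) = fun _ => (0:ℝ) := by
          funext x; rw [hw0 x, mul_zero]
        rw [h0]; exact integrableOn_const hμΩ.ne
      · simp
      · have hzero : ∀ x ∈ Ω,
            |F x - (0 + 0 * d x ^ (β * p))| ^ q * d x ^ (-β * q) = 0 := by
          intro x _; rw [hw0 x]; ring
        rw [setIntegral_congr_fun hΩm hzero, integral_zero,
          Real.zero_rpow (by positivity)]
        exact hε
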